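/- arXiv:1410.7626 — 5 statements merged into one kernel-verified Lean document; each statement's English description precedes it below -/
import Mathlib

section
/- Every left-invariant vector field V ∈ 𝔤 satisfies ∇*∇V = −((A²−B²)²/B²)·V. In particular, every left-invariant vector field is a critical point for the energy functional restricted to left-invariant vector fields of the same length. -/
set_option maxHeartbeats 1000000 in


theorem stmt_2 {G : Type*} [AddCommGroup G] [Module ℝ G]
    (e : Module.Basis (Fin 4) ℝ G)
    (lie : G →ₗ[ℝ] G →ₗ[ℝ] G)
    (g : G →ₗ[ℝ] G →ₗ[ℝ] ℝ)
    (nabla : G →ₗ[ℝ] G →ₗ[ℝ] G)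
    (A B ε : ℝ) (hB : B ≠ 0) (hAB : B ^ 2 ≤ A ^ 2) (hε : ε = 1 ∨ ε = -1)
    (hanti : ∀ X Y : G, lie X Y = - lie Y X)
    (h12 : lie (e 0) (e 1) = (ε * A * Real.sqrt (A ^ 2 - B ^ 2) / B) • e 0)
    (h13 : lie (e 0) (e 2) = (ε * Real.sqrt (A ^ 2 - B ^ 2)) • e 0)
    (h14 : lie (e 0) (e 3) = 0)
    (h23 : lie (e 1) (e 2) = 0)
    (h24 : lie (e 1) (e 3) = B • e 1 - A • e 2)
    (h34 : lie (e 2) (e 3) = A • e 1 - (A ^ 2 / B) • e 2)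
    (hg : ∀ i j : Fin 4, g (e i) (e j) = if i = j then (if i = 2 then (-1 : ℝ) else 1) else 0)
    (hgsymm : ∀ X Y : G, g X Y = g Y X)
    (hK : ∀ X Y Z : G, 2 * g (nabla X Y) Z = g (lie X Y) Z - g (lie Y Z) X + g (lie Z X) Y) :
    (let eps : Fin 4 → ℝ := fun i => if i = (2 : Fin 4) then (-1 : ℝ) else 1
     let lap : G → G := fun V : G => ∑ i : Fin 4, eps i • (nabla (e i) (nabla (e i) V) - nabla (nabla (e i) (e i)) V)
     ∀ V : G, lap V = (-((A ^ 2 - B ^ 2) ^ 2 / B ^ 2)) • V ∧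
       ∃ lam : ℝ, lap V = lam • V) := by

  set s := Real.sqrt (A ^ 2 - B ^ 2) with hsdef
  have hs : s ^ 2 = A ^ 2 - B ^ 2 := Real.sq_sqrt (by linarith)
  have hε2 : ε ^ 2 = 1 := by rcases hε with h | h <;> rw [h] <;> norm_num
  have hlie0 : ∀ X : G, lie X X = 0 := by
    intro X
    have h := hanti X X
    have h2 : lie X X + lie X X = 0 := by nth_rewrite 2 [h]; simp
    have h3 : (2 : ℝ) • lie X X = 0 := by rw [two_smul]; exact h2
    simpa using (smul_eq_zero.mp h3).resolve_left (by norm_num)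
  have h00 := hlie0 (e 0); have h11' := hlie0 (e 1); have h22' := hlie0 (e 2); have h33' := hlie0 (e 3)
  have h21 : lie (e 1) (e 0) = -((ε * A * s / B) • e 0) := by rw [hanti, h12]
  have h31 : lie (e 2) (e 0) = -((ε * s) • e 0) := by rw [hanti, h13]
  have h41 : lie (e 3) (e 0) = 0 := by rw [hanti, h14, neg_zero]
  have h32 : lie (e 2) (e 1) = 0 := by rw [hanti, h23, neg_zero]
  have h42 : lie (e 3) (e 1) = -(B • e 1 - A • e 2) := by rw [hanti, h24]
  have h43 : lie (e 3) (e 2) = -(A • e 1 - (A ^ 2 / B) • e 2) := by rw [hanti, h34]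
  have hrep : ∀ (W : G) (k : Fin 4), g W (e k) = (if k = 2 then (-1 : ℝ) else 1) * e.repr W k := by
    intro W k
    conv_lhs => rw [← e.sum_repr W]
    rw [map_sum]
    simp only [map_smul, LinearMap.sum_apply, LinearMap.smul_apply, hg, smul_eq_mul]
    rw [Finset.sum_eq_single k]
    · by_cases hk : k = 2 <;> simp [hk] <;> ring
    · intro b _ hb; simp [hb]
    · intro h; simp at h
  have hext : ∀ W W' : G, (∀ k, g W (e k) = g W' (e k)) → W = W' := by
    intro W W' h
    apply e.ext_elem
    intro k
    have hk := h k
    rw [hrep, hrep] at hk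
    by_cases h2 : k = 2
    · subst h2; simpa using hk
    · simpa [h2] using hk
  have hKval : ∀ X Y Z : G, g (nabla X Y) Z = (g (lie X Y) Z - g (lie Y Z) X + g (lie Z X) Y) / 2 := by
    intro X Y Z; have := hK X Y Z; linarith
  have n00 : nabla (e 0) (e 0) = (-(ε * A * s / B)) • e 1 + (ε * s) • e 2 := by
    apply hext; intro k
    rw [hKval]
    fin_cases k <;>
      simp [h00, h11', h22', h33', h12, h13, h14, h23, h24, h34, h21, h31, h41, h32, h42, h43, hg,
        ← hsdef] <;>
      field_simp <;> ring
  have n01x : nabla (e 0) (e 1) = (ε * A * s / B) • e 0 := by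
    apply hext; intro k
    rw [hKval]
    fin_cases k <;>
      simp [h00, h11', h22', h33', h12, h13, h14, h23, h24, h34, h21, h31, h41, h32, h42, h43, hg,
        ← hsdef] <;>
      field_simp <;> ring
  have n02 : nabla (e 0) (e 2) = (ε * s) • e 0 := by
    apply hext; intro k
    rw [hKval]
    fin_cases k <;>
      simp [h00, h11', h22', h33', h12, h13, h14, h23, h24, h34, h21, h31, h41, h32, h42, h43, hg,
        ← hsdef] <;>
      field_simp <;> ring
  have n03 : nabla (e 0) (e 3) = (0 : G) := by
    apply hext; intro k
    rw [hKval]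
    fin_cases k <;>
      simp [h00, h11', h22', h33', h12, h13, h14, h23, h24, h34, h21, h31, h41, h32, h42, h43, hg,
        ← hsdef] <;>
      field_simp <;> ring
  have n10 : nabla (e 1) (e 0) = (0 : G) := by
    apply hext; intro k
    rw [hKval]
    fin_cases k <;>
      simp [h00, h11', h22', h33', h12, h13, h14, h23, h24, h34, h21, h31, h41, h32, h42, h43, hg,
        ← hsdef] <;>
      field_simp <;> ring
  have n11 : nabla (e 1) (e 1) = (-B) • e 3 := by
    apply hext; intro k
    rw [hKval]
    fin_cases k <;>
      simp [h00, h11', h22', h33', h12, h13, h14, h23, h24, h34, h21, h31, h41, h32, h42, h43, hg,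
        ← hsdef] <;>
      field_simp <;> ring
  have n12 : nabla (e 1) (e 2) = (-A) • e 3 := by
    apply hext; intro k
    rw [hKval]
    fin_cases k <;>
      simp [h00, h11', h22', h33', h12, h13, h14, h23, h24, h34, h21, h31, h41, h32, h42, h43, hg,
        ← hsdef] <;>
      field_simp <;> ring
  have n13 : nabla (e 1) (e 3) = B • e 1 + (-A) • e 2 := by
    apply hext; intro k
    rw [hKval]
    fin_cases k <;>
      simp [h00, h11', h22', h33', h12, h13, h14, h23, h24, h34, h21, h31, h41, h32, h42, h43, hg,
        ← hsdef] <;>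
      field_simp <;> ring
  have n20 : nabla (e 2) (e 0) = (0 : G) := by
    apply hext; intro k
    rw [hKval]
    fin_cases k <;>
      simp [h00, h11', h22', h33', h12, h13, h14, h23, h24, h34, h21, h31, h41, h32, h42, h43, hg,
        ← hsdef] <;>
      field_simp <;> ring
  have n21 : nabla (e 2) (e 1) = (-A) • e 3 := by
    apply hext; intro k
    rw [hKval]
    fin_cases k <;>
      simp [h00, h11', h22', h33', h12, h13, h14, h23, h24, h34, h21, h31, h41, h32, h42, h43, hg,
        ← hsdef] <;>
      field_simp <;> ring
  have n22 : nabla (e 2) (e 2) = (-(A ^ 2 / B)) • e 3 := by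
    apply hext; intro k
    rw [hKval]
    fin_cases k <;>
      simp [h00, h11', h22', h33', h12, h13, h14, h23, h24, h34, h21, h31, h41, h32, h42, h43, hg,
        ← hsdef] <;>
      field_simp <;> ring
  have n23 : nabla (e 2) (e 3) = A • e 1 + (-(A ^ 2 / B)) • e 2 := by
    apply hext; intro k
    rw [hKval]
    fin_cases k <;>
      simp [h00, h11', h22', h33', h12, h13, h14, h23, h24, h34, h21, h31, h41, h32, h42, h43, hg,
        ← hsdef] <;>
      field_simp <;> ring
  have n30 : nabla (e 3) (e 0) = (0 : G) := by
    apply hext; intro k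
    rw [hKval]
    fin_cases k <;>
      simp [h00, h11', h22', h33', h12, h13, h14, h23, h24, h34, h21, h31, h41, h32, h42, h43, hg,
        ← hsdef] <;>
      field_simp <;> ring
  have n31 : nabla (e 3) (e 1) = (0 : G) := by
    apply hext; intro k
    rw [hKval]
    fin_cases k <;>
      simp [h00, h11', h22', h33', h12, h13, h14, h23, h24, h34, h21, h31, h41, h32, h42, h43, hg,
        ← hsdef] <;>
      field_simp <;> ring
  have n32 : nabla (e 3) (e 2) = (0 : G) := by
    apply hext; intro k
    rw [hKval]
    fin_cases k <;>
      simp [h00, h11', h22', h33', h12, h13, h14, h23, h24, h34, h21, h31, h41, h32, h42, h43, hg,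
        ← hsdef] <;>
      field_simp <;> ring
  have n33 : nabla (e 3) (e 3) = (0 : G) := by
    apply hext; intro k
    rw [hKval]
    fin_cases k <;>
      simp [h00, h11', h22', h33', h12, h13, h14, h23, h24, h34, h21, h31, h41, h32, h42, h43, hg,
        ← hsdef] <;>
      field_simp <;> ring
  have hbasis0 :
      (∑ i : Fin 4, (if i = (2 : Fin 4) then (-1 : ℝ) else 1) •
        (nabla (e i) (nabla (e i) (e 0)) - nabla (nabla (e i) (e i)) (e 0)))
      = (-((A ^ 2 - B ^ 2) ^ 2 / B ^ 2)) • e 0 := by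
    simp only [Fin.sum_univ_four, Fin.isValue, n00, n01x, n02, n03, n10, n11, n12, n13, n20, n21,
        n22, n23, n30, n31, n32, n33, map_add, map_smul, map_neg, map_zero, map_sub,
        LinearMap.add_apply, LinearMap.smul_apply, LinearMap.neg_apply, LinearMap.zero_apply,
        LinearMap.sub_apply, smul_zero, smul_smul, Fin.reduceEq, reduceIte]
    match_scalars <;> field_simp <;> (try ring_nf) <;> (try simp only [hε2, hs]) <;> (try ring)
  have hbasis1 :
      (∑ i : Fin 4, (if i = (2 : Fin 4) then (-1 : ℝ) else 1) •
        (nabla (e i) (nabla (e i) (e 1)) - nabla (nabla (e i) (e i)) (e 1)))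
      = (-((A ^ 2 - B ^ 2) ^ 2 / B ^ 2)) • e 1 := by
    simp only [Fin.sum_univ_four, Fin.isValue, n00, n01x, n02, n03, n10, n11, n12, n13, n20, n21,
        n22, n23, n30, n31, n32, n33, map_add, map_smul, map_neg, map_zero, map_sub,
        LinearMap.add_apply, LinearMap.smul_apply, LinearMap.neg_apply, LinearMap.zero_apply,
        LinearMap.sub_apply, smul_zero, smul_smul, Fin.reduceEq, reduceIte]
    match_scalars <;> field_simp <;> (try ring_nf) <;> (try simp only [hε2, hs]) <;> (try ring)
  have hbasis2 :
      (∑ i : Fin 4, (if i = (2 : Fin 4) then (-1 : ℝ) else 1) •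
        (nabla (e i) (nabla (e i) (e 2)) - nabla (nabla (e i) (e i)) (e 2)))
      = (-((A ^ 2 - B ^ 2) ^ 2 / B ^ 2)) • e 2 := by
    simp only [Fin.sum_univ_four, Fin.isValue, n00, n01x, n02, n03, n10, n11, n12, n13, n20, n21,
        n22, n23, n30, n31, n32, n33, map_add, map_smul, map_neg, map_zero, map_sub,
        LinearMap.add_apply, LinearMap.smul_apply, LinearMap.neg_apply, LinearMap.zero_apply,
        LinearMap.sub_apply, smul_zero, smul_smul, Fin.reduceEq, reduceIte]
    match_scalars <;> field_simp <;> (try ring_nf) <;> (try simp only [hε2, hs]) <;> (try ring)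
  have hbasis3 :
      (∑ i : Fin 4, (if i = (2 : Fin 4) then (-1 : ℝ) else 1) •
        (nabla (e i) (nabla (e i) (e 3)) - nabla (nabla (e i) (e i)) (e 3)))
      = (-((A ^ 2 - B ^ 2) ^ 2 / B ^ 2)) • e 3 := by
    simp only [Fin.sum_univ_four, Fin.isValue, n00, n01x, n02, n03, n10, n11, n12, n13, n20, n21,
        n22, n23, n30, n31, n32, n33, map_add, map_smul, map_neg, map_zero, map_sub,
        LinearMap.add_apply, LinearMap.smul_apply, LinearMap.neg_apply, LinearMap.zero_apply,
        LinearMap.sub_apply, smul_zero, smul_smul, Fin.reduceEq, reduceIte]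
    match_scalars <;> field_simp <;> (try ring_nf) <;> (try simp only [hε2, hs]) <;> (try ring)
  -- assemble
  set L : G →ₗ[ℝ] G := ∑ i : Fin 4, (if i = (2 : Fin 4) then (-1 : ℝ) else 1) •
      ((nabla (e i)).comp (nabla (e i)) - nabla ((nabla (e i)) (e i))) with hLdef
  have hLap : ∀ W : G, L W = ∑ i : Fin 4, (if i = (2 : Fin 4) then (-1 : ℝ) else 1) •
      (nabla (e i) (nabla (e i) W) - nabla (nabla (e i) (e i)) W) := by
    intro W
    rw [hLdef, LinearMap.sum_apply]
    exact Finset.sum_congr rfl fun i _ => by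
      simp only [LinearMap.smul_apply, LinearMap.sub_apply, LinearMap.comp_apply]
  have hLeq : L = (-((A ^ 2 - B ^ 2) ^ 2 / B ^ 2)) • (LinearMap.id : G →ₗ[ℝ] G) := by
    apply Module.Basis.ext e
    intro j
    rw [hLap, LinearMap.smul_apply, LinearMap.id_coe, id_eq]
    fin_cases j
    · exact hbasis0
    · exact hbasis1
    · exact hbasis2
    · exact hbasis3
  have hall : ∀ V : G, (∑ i : Fin 4, (if i = (2 : Fin 4) then (-1 : ℝ) else 1) •
      (nabla (e i) (nabla (e i) V) - nabla (nabla (e i) (e i)) V))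
      = (-((A ^ 2 - B ^ 2) ^ 2 / B ^ 2)) • V := by
    intro V
    rw [← hLap V, hLeq, LinearMap.smul_apply, LinearMap.id_coe, id_eq]
  intro eps lap V
  exact ⟨hall V, ⟨-((A ^ 2 - B ^ 2) ^ 2 / B ^ 2), hall V⟩⟩
end

section
/- Suppose ε = −1, δ = 1 and A² ≥ B², and let V = c(e₂ + e₃ − e₄) with c ≠ 0. Then V defines a harmonic map (i.e., ∇*∇V = 0 and Σ_{i=1}^{4} εᵢ R(∇_{eᵢ}V, V)eᵢ = 0) if and only if A = −B. -/
set_option maxHeartbeats 2000000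


theorem stmt_4 {G : Type*} [AddCommGroup G] [Module ℝ G]
    (e : Module.Basis (Fin 4) ℝ G)
    (lie : G →ₗ[ℝ] G →ₗ[ℝ] G)
    (g : G →ₗ[ℝ] G →ₗ[ℝ] ℝ)
    (nabla : G →ₗ[ℝ] G →ₗ[ℝ] G)
    (A B ε δ c : ℝ) (hAB : B ^ 2 ≤ A ^ 2) (hε : ε = -1) (hδ : δ = 1)
    (hc : c ≠ 0)
    (hanti : ∀ X Y : G, lie X Y = - lie Y X)
    (h12 : lie (e 0) (e 1) = (ε * Real.sqrt (A ^ 2 - B ^ 2) / 2) • e 0)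
    (h13 : lie (e 0) (e 2) = (-(ε * δ * Real.sqrt (A ^ 2 - B ^ 2)) / 2) • e 0)
    (h14 : lie (e 0) (e 3) = ((δ * A + B) / 2) • e 0)
    (h23 : lie (e 1) (e 2) = 0)
    (h24 : lie (e 1) (e 3) = B • (e 1 + δ • e 2))
    (h34 : lie (e 2) (e 3) = A • (e 1 + δ • e 2))
    (hg : ∀ i j : Fin 4, g (e i) (e j) = if i = j then (if i = 2 then (-1 : ℝ) else 1) else 0)
    (hgsymm : ∀ X Y : G, g X Y = g Y X)
    (hK : ∀ X Y Z : G, 2 * g (nabla X Y) Z = g (lie X Y) Z - g (lie Y Z) X + g (lie Z X) Y) :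
    (let eps : Fin 4 → ℝ := fun i => if i = (2 : Fin 4) then (-1 : ℝ) else 1
     let lap : G → G := fun V : G => ∑ i : Fin 4, eps i • (nabla (e i) (nabla (e i) V) - nabla (nabla (e i) (e i)) V)
     let tr : G → G := fun V : G => ∑ i : Fin 4, eps i • (nabla (lie (nabla (e i) V) V) (e i) - nabla (nabla (e i) V) (nabla V (e i)) + nabla V (nabla (nabla (e i) V) (e i)))
     let V : G := c • (e 1 + e 2 - e 3)
     (lap V = 0 ∧ tr V = 0) ↔ A = -B) := by
  subst hε hδ
  set s : ℝ := Real.sqrt (A ^ 2 - B ^ 2) with hs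
  -- trivial bracket lemmas
  have lXX : ∀ X : G, lie X X = 0 := by
    intro X
    have h := hanti X X
    have h2 : lie X X + lie X X = 0 := by nth_rewrite 1 [h]; abel
    have h3 : (2:ℝ) • lie X X = 0 := by rw [two_smul]; exact h2
    simpa using (smul_eq_zero.mp h3).resolve_left (by norm_num)
  have l01 : lie (e 0) (e 1) = (-(s/2)) • e 0 := by rw [h12]; module
  have l02 : lie (e 0) (e 2) = (s/2) • e 0 := by rw [h13]; module
  have l03 : lie (e 0) (e 3) = ((A+B)/2) • e 0 := by rw [h14]; module
  have l12 : lie (e 1) (e 2) = (0:G) := h23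
  have l13 : lie (e 1) (e 3) = B • e 1 + B • e 2 := by rw [h24]; module
  have l23 : lie (e 2) (e 3) = A • e 1 + A • e 2 := by rw [h34]; module
  have l10 : lie (e 1) (e 0) = (s/2) • e 0 := by rw [hanti, l01]; module
  have l20 : lie (e 2) (e 0) = (-(s/2)) • e 0 := by rw [hanti, l02]; module
  have l30 : lie (e 3) (e 0) = (-((A+B)/2)) • e 0 := by rw [hanti, l03]; module
  have l21 : lie (e 2) (e 1) = (0:G) := by rw [hanti, l12]; simp
  have l31 : lie (e 3) (e 1) = (-B) • e 1 + (-B) • e 2 := by rw [hanti, l13]; module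
  have l32 : lie (e 3) (e 2) = (-A) • e 1 + (-A) • e 2 := by rw [hanti, l23]; module
  have l00 : lie (e 0) (e 0) = (0:G) := lXX _
  have l11 : lie (e 1) (e 1) = (0:G) := lXX _
  have l22 : lie (e 2) (e 2) = (0:G) := lXX _
  have l33 : lie (e 3) (e 3) = (0:G) := lXX _
  -- expansion of g in coordinates
  have gexp : ∀ (W : G) (k : Fin 4), g W (e k) = (if k = 2 then (-1:ℝ) else 1) * e.repr W k := by
    intro W k
    conv_lhs => rw [← e.sum_repr W]
    simp [map_sum, LinearMap.sum_apply, map_smul, LinearMap.smul_apply, hg,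
      Finset.sum_ite_eq, mul_comm, -Module.Basis.sum_repr]
  have heq : ∀ X Y : G, (∀ k : Fin 4, g X (e k) = g Y (e k)) → X = Y := by
    intro X Y h
    have hr : ∀ k, e.repr X k = e.repr Y k := by
      intro k
      have hk := h k
      rw [gexp, gexp] at hk
      by_cases h2 : k = 2
      · subst h2; simp at hk; linarith
      · simp [h2] at hk; linarith
    exact e.repr.injective (Finsupp.ext hr)
  have n00 : nabla (e 0) (e 0) = (s/2) • e 1 + (s/2) • e 2 + (-((A+B)/2)) • e 3 := by
    apply heq
    intro k
    have key := hK (e 0) (e 0) (e k)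
    fin_cases k <;>
      simp [l00, l01, l02, l03, l10, l11, l12, l13, l20, l21, l22, l23, l30, l31, l32, l33,
        hg, map_smul, LinearMap.smul_apply, smul_eq_mul] at key ⊢ <;>
      linarith
  have n01 : nabla (e 0) (e 1) = (-(s/2)) • e 0 := by
    apply heq
    intro k
    have key := hK (e 0) (e 1) (e k)
    fin_cases k <;>
      simp [l00, l01, l02, l03, l10, l11, l12, l13, l20, l21, l22, l23, l30, l31, l32, l33,
        hg, map_smul, LinearMap.smul_apply, smul_eq_mul] at key ⊢ <;>
      linarith
  have n02 : nabla (e 0) (e 2) = (s/2) • e 0 := by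
    apply heq
    intro k
    have key := hK (e 0) (e 2) (e k)
    fin_cases k <;>
      simp [l00, l01, l02, l03, l10, l11, l12, l13, l20, l21, l22, l23, l30, l31, l32, l33,
        hg, map_smul, LinearMap.smul_apply, smul_eq_mul] at key ⊢ <;>
      linarith
  have n03 : nabla (e 0) (e 3) = ((A+B)/2) • e 0 := by
    apply heq
    intro k
    have key := hK (e 0) (e 3) (e k)
    fin_cases k <;>
      simp [l00, l01, l02, l03, l10, l11, l12, l13, l20, l21, l22, l23, l30, l31, l32, l33,
        hg, map_smul, LinearMap.smul_apply, smul_eq_mul] at key ⊢ <;>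
      linarith
  have n10 : nabla (e 1) (e 0) = (0:G) := by
    apply heq
    intro k
    have key := hK (e 1) (e 0) (e k)
    fin_cases k <;>
      simp [l00, l01, l02, l03, l10, l11, l12, l13, l20, l21, l22, l23, l30, l31, l32, l33,
        hg, map_smul, LinearMap.smul_apply, smul_eq_mul] at key ⊢ <;>
      linarith
  have n11 : nabla (e 1) (e 1) = (-B) • e 3 := by
    apply heq
    intro k
    have key := hK (e 1) (e 1) (e k)
    fin_cases k <;>
      simp [l00, l01, l02, l03, l10, l11, l12, l13, l20, l21, l22, l23, l30, l31, l32, l33,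
        hg, map_smul, LinearMap.smul_apply, smul_eq_mul] at key ⊢ <;>
      linarith
  have n12 : nabla (e 1) (e 2) = ((B-A)/2) • e 3 := by
    apply heq
    intro k
    have key := hK (e 1) (e 2) (e k)
    fin_cases k <;>
      simp [l00, l01, l02, l03, l10, l11, l12, l13, l20, l21, l22, l23, l30, l31, l32, l33,
        hg, map_smul, LinearMap.smul_apply, smul_eq_mul] at key ⊢ <;>
      linarith
  have n13 : nabla (e 1) (e 3) = B • e 1 + ((B-A)/2) • e 2 := by
    apply heq
    intro k
    have key := hK (e 1) (e 3) (e k)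
    fin_cases k <;>
      simp [l00, l01, l02, l03, l10, l11, l12, l13, l20, l21, l22, l23, l30, l31, l32, l33,
        hg, map_smul, LinearMap.smul_apply, smul_eq_mul] at key ⊢ <;>
      linarith
  have n20 : nabla (e 2) (e 0) = (0:G) := by
    apply heq
    intro k
    have key := hK (e 2) (e 0) (e k)
    fin_cases k <;>
      simp [l00, l01, l02, l03, l10, l11, l12, l13, l20, l21, l22, l23, l30, l31, l32, l33,
        hg, map_smul, LinearMap.smul_apply, smul_eq_mul] at key ⊢ <;>
      linarith
  have n21 : nabla (e 2) (e 1) = ((B-A)/2) • e 3 := by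
    apply heq
    intro k
    have key := hK (e 2) (e 1) (e k)
    fin_cases k <;>
      simp [l00, l01, l02, l03, l10, l11, l12, l13, l20, l21, l22, l23, l30, l31, l32, l33,
        hg, map_smul, LinearMap.smul_apply, smul_eq_mul] at key ⊢ <;>
      linarith
  have n22 : nabla (e 2) (e 2) = A • e 3 := by
    apply heq
    intro k
    have key := hK (e 2) (e 2) (e k)
    fin_cases k <;>
      simp [l00, l01, l02, l03, l10, l11, l12, l13, l20, l21, l22, l23, l30, l31, l32, l33,
        hg, map_smul, LinearMap.smul_apply, smul_eq_mul] at key ⊢ <;>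
      linarith
  have n23 : nabla (e 2) (e 3) = ((A-B)/2) • e 1 + A • e 2 := by
    apply heq
    intro k
    have key := hK (e 2) (e 3) (e k)
    fin_cases k <;>
      simp [l00, l01, l02, l03, l10, l11, l12, l13, l20, l21, l22, l23, l30, l31, l32, l33,
        hg, map_smul, LinearMap.smul_apply, smul_eq_mul] at key ⊢ <;>
      linarith
  have n30 : nabla (e 3) (e 0) = (0:G) := by
    apply heq
    intro k
    have key := hK (e 3) (e 0) (e k)
    fin_cases k <;>
      simp [l00, l01, l02, l03, l10, l11, l12, l13, l20, l21, l22, l23, l30, l31, l32, l33,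
        hg, map_smul, LinearMap.smul_apply, smul_eq_mul] at key ⊢ <;>
      linarith
  have n31 : nabla (e 3) (e 1) = (-((A+B)/2)) • e 2 := by
    apply heq
    intro k
    have key := hK (e 3) (e 1) (e k)
    fin_cases k <;>
      simp [l00, l01, l02, l03, l10, l11, l12, l13, l20, l21, l22, l23, l30, l31, l32, l33,
        hg, map_smul, LinearMap.smul_apply, smul_eq_mul] at key ⊢ <;>
      linarith
  have n32 : nabla (e 3) (e 2) = (-((A+B)/2)) • e 1 := by
    apply heq
    intro k
    have key := hK (e 3) (e 2) (e k)
    fin_cases k <;>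
      simp [l00, l01, l02, l03, l10, l11, l12, l13, l20, l21, l22, l23, l30, l31, l32, l33,
        hg, map_smul, LinearMap.smul_apply, smul_eq_mul] at key ⊢ <;>
      linarith
  have n33 : nabla (e 3) (e 3) = (0:G) := by
    apply heq
    intro k
    have key := hK (e 3) (e 3) (e k)
    fin_cases k <;>
      simp [l00, l01, l02, l03, l10, l11, l12, l13, l20, l21, l22, l23, l30, l31, l32, l33,
        hg, map_smul, LinearMap.smul_apply, smul_eq_mul] at key ⊢ <;>
      linarith
  have hw : (e 1 : G) + e 2 - e 3 ≠ (0:G) := by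
    intro hcon
    have h1 : g ((e 1 : G) + e 2 - e 3) (e 1) = 0 := by rw [hcon]; simp
    simp [map_add, map_sub, LinearMap.add_apply, LinearMap.sub_apply, hg] at h1
  have hlap : (∑ i : Fin 4, (if i = (2:Fin 4) then (-1:ℝ) else 1) • ((nabla (e i)) ((nabla (e i)) (c • (e 1 + e 2 - e 3))) - (nabla ((nabla (e i)) (e i))) (c • (e 1 + e 2 - e 3)))) = (-(3*c/4)*(A+B)^2) • ((e 1 : G) + e 2 - e 3) := by
    rw [Fin.sum_univ_four]
    simp only [Fin.reduceEq, reduceIte, one_smul, neg_smul, neg_one_smul]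
    simp only [map_add, map_sub, map_smul, map_neg, map_zero, LinearMap.add_apply, LinearMap.sub_apply, LinearMap.smul_apply, LinearMap.neg_apply, LinearMap.zero_apply, n00, n01, n02, n03, n10, n11, n12, n13, n20, n21, n22, n23, n30, n31, n32, n33]
    module
  have htr : (∑ i : Fin 4, (if i = (2:Fin 4) then (-1:ℝ) else 1) • ((nabla ((lie ((nabla (e i)) (c • (e 1 + e 2 - e 3)))) (c • (e 1 + e 2 - e 3)))) (e i) - (nabla ((nabla (e i)) (c • (e 1 + e 2 - e 3)))) ((nabla (c • (e 1 + e 2 - e 3))) (e i)) + (nabla (c • (e 1 + e 2 - e 3))) ((nabla ((nabla (e i)) (c • (e 1 + e 2 - e 3)))) (e i)))) = (3*c^2/8*(A+B)^3) • ((e 1 : G) + e 2 - e 3) := by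
    rw [Fin.sum_univ_four]
    simp only [Fin.reduceEq, reduceIte, one_smul, neg_smul, neg_one_smul]
    simp only [map_add, map_sub, map_smul, map_neg, map_zero, LinearMap.add_apply, LinearMap.sub_apply, LinearMap.smul_apply, LinearMap.neg_apply, LinearMap.zero_apply, n00, n01, n02, n03, n10, n11, n12, n13, n20, n21, n22, n23, n30, n31, n32, n33, l00, l01, l02, l03, l10, l11, l12, l13, l20, l21, l22, l23, l30, l31, l32, l33]
    module
  show ((∑ i : Fin 4, (if i = (2:Fin 4) then (-1:ℝ) else 1) • ((nabla (e i)) ((nabla (e i)) (c • (e 1 + e 2 - e 3))) - (nabla ((nabla (e i)) (e i))) (c • (e 1 + e 2 - e 3)))) = 0 ∧ (∑ i : Fin 4, (if i = (2:Fin 4) then (-1:ℝ) else 1) • ((nabla ((lie ((nabla (e i)) (c • (e 1 + e 2 - e 3)))) (c • (e 1 + e 2 - e 3)))) (e i) - (nabla ((nabla (e i)) (c • (e 1 + e 2 - e 3)))) ((nabla (c • (e 1 + e 2 - e 3))) (e i)) + (nabla (c • (e 1 + e 2 - e 3))) ((nabla ((nabla (e i)) (c • (e 1 + e 2 - e 3))))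 (e i)))) = 0) ↔ A = -B
  rw [hlap, htr]
  constructor
  · rintro ⟨h1, -⟩
    rcases smul_eq_zero.mp h1 with h | h
    · have h3 : (A+B)^2 = 0 := by
        rcases mul_eq_zero.mp h with h' | h'
        · exfalso; apply hc; linarith
        · exact h'
      have h4 : A + B = 0 := by
        have := pow_eq_zero_iff (n := 2) (by norm_num) |>.mp h3
        exact this
      linarith
    · exact absurd h hw
  · intro hA
    constructor
    · rw [hA, show (-(3*c/4)*((-B)+B)^2) = 0 by ring, zero_smul]
    · rw [hA, show ((3*c^2/8)*((-B)+B)^3) = 0 by ring, zero_smul]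
end

section
/- Let V = a e₁ for some a ∈ ℝ. Then the rough Laplacian satisfies ∇*∇V = −(A+B)²·V; in particular, V is a critical point for the energy functional restricted to left-invariant vector fields of the same length (i.e., ∇*∇V is collinear to V). -/
theorem stmt_6 {G : Type*} [AddCommGroup G] [Module ℝ G]
    (e : Module.Basis (Fin 4) ℝ G)
    (lie : G →ₗ[ℝ] G →ₗ[ℝ] G)
    (g : G →ₗ[ℝ] G →ₗ[ℝ] ℝ)
    (nabla : G →ₗ[ℝ] G →ₗ[ℝ] G)
    (A B ε a : ℝ) (hε : ε = 1 ∨ ε = -1)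
    (hanti : ∀ X Y : G, lie X Y = - lie Y X)
    (h12 : lie (e 0) (e 1) = 0)
    (h13 : lie (e 0) (e 2) = 0)
    (h14 : lie (e 0) (e 3) = (-(A + B)) • e 0)
    (h23 : lie (e 1) (e 2) = 0)
    (h24 : lie (e 1) (e 3) = B • e 1 - (ε * Real.sqrt (A ^ 2 + A * B + B ^ 2)) • e 2)
    (h34 : lie (e 2) (e 3) = (ε * Real.sqrt (A ^ 2 + A * B + B ^ 2)) • e 1 + A • e 2)
    (hg : ∀ i j : Fin 4, g (e i) (e j) = if i = j then (if i = 2 then (-1 : ℝ) else 1) else 0)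
    (hgsymm : ∀ X Y : G, g X Y = g Y X)
    (hK : ∀ X Y Z : G, 2 * g (nabla X Y) Z = g (lie X Y) Z - g (lie Y Z) X + g (lie Z X) Y) :
    (let eps : Fin 4 → ℝ := fun i => if i = (2 : Fin 4) then (-1 : ℝ) else 1
     let lap : G → G := fun V : G => ∑ i : Fin 4, eps i • (nabla (e i) (nabla (e i) V) - nabla (nabla (e i) (e i)) V)
     let V : G := a • e 0
     lap V = (-(A + B) ^ 2) • V ∧ ∃ lam : ℝ, lap V = lam • V) := by
  intro eps lap V
  -- self brackets vanish
  have hself : ∀ X : G, lie X X = 0 := by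
    intro X
    have h := hanti X X
    have h2 : (2 : ℝ) • lie X X = 0 := by
      rw [two_smul]; nth_rewrite 2 [h]; simp
    have := smul_eq_zero.mp h2
    rcases this with h3 | h3
    · norm_num at h3
    · exact h3
  have hl00 : lie (e 0) (e 0) = 0 := hself _
  have hl11 : lie (e 1) (e 1) = 0 := hself _
  have hl22 : lie (e 2) (e 2) = 0 := hself _
  have hl33 : lie (e 3) (e 3) = 0 := hself _
  have hl10 : lie (e 1) (e 0) = 0 := by rw [hanti, h12]; simp
  have hl20 : lie (e 2) (e 0) = 0 := by rw [hanti, h13]; simp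
  have hl30 : lie (e 3) (e 0) = (A + B) • e 0 := by rw [hanti, h14, neg_smul, neg_neg]
  have hl21 : lie (e 2) (e 1) = 0 := by rw [hanti, h23]; simp
  have hl31 : lie (e 3) (e 1) = -(B • e 1 - (ε * Real.sqrt (A ^ 2 + A * B + B ^ 2)) • e 2) := by
    rw [hanti, h24]
  have hl32 : lie (e 3) (e 2) = -((ε * Real.sqrt (A ^ 2 + A * B + B ^ 2)) • e 1 + A • e 2) := by
    rw [hanti, h34]
  -- nondegeneracy on the basis
  have key : ∀ W : G, (∀ k : Fin 4, g W (e k) = 0) → W = 0 := by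
    intro W h
    have hrep : ∀ k : Fin 4, e.repr W k = 0 := by
      intro k
      have h2 : g (∑ i : Fin 4, e.repr W i • e i) (e k) = 0 := by
        rw [e.sum_repr]; exact h k
      rw [map_sum] at h2
      simp only [map_smul, LinearMap.coe_sum, Finset.sum_apply, LinearMap.smul_apply,
        hg, smul_eq_mul] at h2
      rw [Finset.sum_eq_single k] at h2
      · rw [if_pos rfl] at h2
        split_ifs at h2 <;> linarith
      · intro b _ hb
        simp [hb]
      · intro hk
        exact absurd (Finset.mem_univ k) hk
    have : e.repr W = 0 := Finsupp.ext hrep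
    exact (LinearEquiv.map_eq_zero_iff e.repr).mp this
  have eq_of_g : ∀ W W' : G, (∀ k : Fin 4, g W (e k) = g W' (e k)) → W = W' := by
    intro W W' h
    have : W - W' = 0 := by
      apply key
      intro k
      rw [map_sub, LinearMap.sub_apply, h k, sub_self]
    exact sub_eq_zero.mp this
  -- compute the needed covariant derivatives
  have hk4 : ∀ m : Fin 4, m = 0 ∨ m = 1 ∨ m = 2 ∨ m = 3 := by decide
  have d01 : (0:Fin 4) ≠ 1 := by decide
  have d02 : (0:Fin 4) ≠ 2 := by decide
  have d03 : (0:Fin 4) ≠ 3 := by decide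
  have d10 : (1:Fin 4) ≠ 0 := by decide
  have d12 : (1:Fin 4) ≠ 2 := by decide
  have d13 : (1:Fin 4) ≠ 3 := by decide
  have d20 : (2:Fin 4) ≠ 0 := by decide
  have d21 : (2:Fin 4) ≠ 1 := by decide
  have d23 : (2:Fin 4) ≠ 3 := by decide
  have d30 : (3:Fin 4) ≠ 0 := by decide
  have d31 : (3:Fin 4) ≠ 1 := by decide
  have d32 : (3:Fin 4) ≠ 2 := by decide
  have tac : ∀ (i j : Fin 4) (N : G),
      (∀ k : Fin 4, g (lie (e i) (e j)) (e k) - g (lie (e j) (e k)) (e i)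
        + g (lie (e k) (e i)) (e j) = 2 * g N (e k)) → nabla (e i) (e j) = N := by
    intro i j N h
    apply eq_of_g
    intro k
    have h2 := hK (e i) (e j) (e k)
    rw [h k] at h2
    linarith
  have hn00 : nabla (e 0) (e 0) = (A + B) • e 3 := by
    apply tac
    intro k
    rcases hk4 k with rfl | rfl | rfl | rfl <;>
      simp only [hl00, hl10, hl20, hl30, h12, h13, h14, h23, h24, h34, hl11, hl21, hl31,
        hl22, hl32, hl33, map_zero, map_add, map_sub, map_neg, map_smul,
        LinearMap.zero_apply, LinearMap.add_apply, LinearMap.sub_apply, LinearMap.neg_apply,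
        LinearMap.smul_apply, hg, smul_eq_mul] <;>
      norm_num [d01, d02, d03, d10, d12, d13, d20, d21, d23, d30, d31, d32] <;> first | rfl | ring_nf
  have hn10 : nabla (e 1) (e 0) = 0 := by
    apply tac
    intro k
    rcases hk4 k with rfl | rfl | rfl | rfl <;>
      simp only [hl00, hl10, hl20, hl30, h12, h13, h14, h23, h24, h34, hl11, hl21, hl31,
        hl22, hl32, hl33, map_zero, map_add, map_sub, map_neg, map_smul,
        LinearMap.zero_apply, LinearMap.add_apply, LinearMap.sub_apply, LinearMap.neg_apply,
        LinearMap.smul_apply, hg, smul_eq_mul] <;>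
      norm_num [d01, d02, d03, d10, d12, d13, d20, d21, d23, d30, d31, d32] <;> first | rfl | ring_nf
  have hn20 : nabla (e 2) (e 0) = 0 := by
    apply tac
    intro k
    rcases hk4 k with rfl | rfl | rfl | rfl <;>
      simp only [hl00, hl10, hl20, hl30, h12, h13, h14, h23, h24, h34, hl11, hl21, hl31,
        hl22, hl32, hl33, map_zero, map_add, map_sub, map_neg, map_smul,
        LinearMap.zero_apply, LinearMap.add_apply, LinearMap.sub_apply, LinearMap.neg_apply,
        LinearMap.smul_apply, hg, smul_eq_mul] <;>
      norm_num [d01, d02, d03, d10, d12, d13, d20, d21, d23, d30, d31, d32] <;> first | rfl | ring_nf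
  have hn30 : nabla (e 3) (e 0) = 0 := by
    apply tac
    intro k
    rcases hk4 k with rfl | rfl | rfl | rfl <;>
      simp only [hl00, hl10, hl20, hl30, h12, h13, h14, h23, h24, h34, hl11, hl21, hl31,
        hl22, hl32, hl33, map_zero, map_add, map_sub, map_neg, map_smul,
        LinearMap.zero_apply, LinearMap.add_apply, LinearMap.sub_apply, LinearMap.neg_apply,
        LinearMap.smul_apply, hg, smul_eq_mul] <;>
      norm_num [d01, d02, d03, d10, d12, d13, d20, d21, d23, d30, d31, d32] <;> first | rfl | ring_nf
  have hn03 : nabla (e 0) (e 3) = (-(A + B)) • e 0 := by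
    apply tac
    intro k
    rcases hk4 k with rfl | rfl | rfl | rfl <;>
      simp only [hl00, hl10, hl20, hl30, h12, h13, h14, h23, h24, h34, hl11, hl21, hl31,
        hl22, hl32, hl33, map_zero, map_add, map_sub, map_neg, map_smul,
        LinearMap.zero_apply, LinearMap.add_apply, LinearMap.sub_apply, LinearMap.neg_apply,
        LinearMap.smul_apply, hg, smul_eq_mul] <;>
      norm_num [d01, d02, d03, d10, d12, d13, d20, d21, d23, d30, d31, d32] <;> first | rfl | ring_nf
  have hn11 : nabla (e 1) (e 1) = (-B) • e 3 := by
    apply tac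
    intro k
    rcases hk4 k with rfl | rfl | rfl | rfl <;>
      simp only [hl00, hl10, hl20, hl30, h12, h13, h14, h23, h24, h34, hl11, hl21, hl31,
        hl22, hl32, hl33, map_zero, map_add, map_sub, map_neg, map_smul,
        LinearMap.zero_apply, LinearMap.add_apply, LinearMap.sub_apply, LinearMap.neg_apply,
        LinearMap.smul_apply, hg, smul_eq_mul] <;>
      norm_num [d01, d02, d03, d10, d12, d13, d20, d21, d23, d30, d31, d32] <;> first | rfl | ring_nf
  have hn22 : nabla (e 2) (e 2) = A • e 3 := by
    apply tac
    intro k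
    rcases hk4 k with rfl | rfl | rfl | rfl <;>
      simp only [hl00, hl10, hl20, hl30, h12, h13, h14, h23, h24, h34, hl11, hl21, hl31,
        hl22, hl32, hl33, map_zero, map_add, map_sub, map_neg, map_smul,
        LinearMap.zero_apply, LinearMap.add_apply, LinearMap.sub_apply, LinearMap.neg_apply,
        LinearMap.smul_apply, hg, smul_eq_mul] <;>
      norm_num [d01, d02, d03, d10, d12, d13, d20, d21, d23, d30, d31, d32] <;> first | rfl | ring_nf
  have hn33 : nabla (e 3) (e 3) = 0 := by
    apply tac
    intro k
    rcases hk4 k with rfl | rfl | rfl | rfl <;>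
      simp only [hl00, hl10, hl20, hl30, h12, h13, h14, h23, h24, h34, hl11, hl21, hl31,
        hl22, hl32, hl33, map_zero, map_add, map_sub, map_neg, map_smul,
        LinearMap.zero_apply, LinearMap.add_apply, LinearMap.sub_apply, LinearMap.neg_apply,
        LinearMap.smul_apply, hg, smul_eq_mul] <;>
      norm_num [d01, d02, d03, d10, d12, d13, d20, d21, d23, d30, d31, d32] <;> first | rfl | ring_nf
  -- compute the Laplacian
  have hlap : lap V = (-(A + B) ^ 2) • V := by
    show (∑ i : Fin 4, eps i • (nabla (e i) (nabla (e i) V) - nabla (nabla (e i) (e i)) V))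
      = (-(A + B) ^ 2) • V
    have hV : V = a • e 0 := rfl
    rw [Fin.sum_univ_four, hV]
    simp only [eps, map_smul, LinearMap.smul_apply, hn00, hn10, hn20, hn30, hn03, hn11,
      hn22, hn33, map_zero, LinearMap.zero_apply, LinearMap.map_zero, smul_zero,
      LinearMap.add_apply, LinearMap.sub_apply, LinearMap.neg_apply]
    rw [if_neg d02]
    module
  exact ⟨hlap, ⟨-(A + B) ^ 2, hlap⟩⟩
end

section
/- For every left-invariant vector field V = a e₁ + b e₂ + c e₃ + d e₄ (a,b,c,d ∈ ℝ), the rough Laplacian is given by ∇*∇V = −A²a e₁ + ((B²−A²)b − 3ABc) e₂ + ((B²−A²)c − 3ABb) e₃ − 3A²d e₄. In particular, if V = b(e₂ + e₃), then ∇*∇V = (B²−A²−3AB)·V, so V is a critical point for the energy functional restricted to left-invariant vector fields of the same length. -/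
set_option maxHeartbeats 2000000 in
theorem stmt_8 {G : Type*} [AddCommGroup G] [Module ℝ G]
    (e : Module.Basis (Fin 4) ℝ G)
    (lie : G →ₗ[ℝ] G →ₗ[ℝ] G)
    (g : G →ₗ[ℝ] G →ₗ[ℝ] ℝ)
    (nabla : G →ₗ[ℝ] G →ₗ[ℝ] G)
    (A B : ℝ)
    (hanti : ∀ X Y : G, lie X Y = - lie Y X)
    (h12 : lie (e 0) (e 1) = 0)
    (h13 : lie (e 0) (e 2) = 0)
    (h14 : lie (e 0) (e 3) = A • e 0)
    (h23 : lie (e 1) (e 2) = 0)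
    (h24 : lie (e 1) (e 3) = A • e 1 + B • e 2)
    (h34 : lie (e 2) (e 3) = B • e 1 + A • e 2)
    (hg : ∀ i j : Fin 4, g (e i) (e j) = if i = j then (if i = 2 then (-1 : ℝ) else 1) else 0)
    (hgsymm : ∀ X Y : G, g X Y = g Y X)
    (hK : ∀ X Y Z : G, 2 * g (nabla X Y) Z = g (lie X Y) Z - g (lie Y Z) X + g (lie Z X) Y) :
    (let eps : Fin 4 → ℝ := fun i => if i = (2 : Fin 4) then (-1 : ℝ) else 1
     let lap : G → G := fun V : G => ∑ i : Fin 4, eps i • (nabla (e i) (nabla (e i) V) - nabla (nabla (e i) (e i)) V)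
     (∀ a b c d : ℝ,
        lap (a • e 0 + b • e 1 + c • e 2 + d • e 3)
          = (-(A ^ 2 * a)) • e 0 + ((B ^ 2 - A ^ 2) * b - 3 * A * B * c) • e 1
            + ((B ^ 2 - A ^ 2) * c - 3 * A * B * b) • e 2 + (-(3 * A ^ 2 * d)) • e 3) ∧
     (∀ b : ℝ,
        lap (b • (e 1 + e 2)) = (B ^ 2 - A ^ 2 - 3 * A * B) • (b • (e 1 + e 2)) ∧
        ∃ lam : ℝ, lap (b • (e 1 + e 2)) = lam • (b • (e 1 + e 2)))) := by
  intro eps lap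
  -- trivial brackets
  have hzero : ∀ X : G, lie X X = 0 := by
    intro X
    have h := hanti X X
    have h2 : (2 : ℝ) • lie X X = 0 := by
      rw [two_smul]
      nth_rewrite 2 [h]
      abel
    simpa using (smul_eq_zero.mp h2).resolve_left (by norm_num)
  have h21 : lie (e 1) (e 0) = 0 := by rw [hanti, h12, neg_zero]
  have h31 : lie (e 2) (e 0) = 0 := by rw [hanti, h13, neg_zero]
  have h41 : lie (e 3) (e 0) = -(A • e 0) := by rw [hanti, h14]
  have h32 : lie (e 2) (e 1) = 0 := by rw [hanti, h23, neg_zero]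
  have h42 : lie (e 3) (e 1) = -(A • e 1 + B • e 2) := by rw [hanti, h24]
  have h43 : lie (e 3) (e 2) = -(B • e 1 + A • e 2) := by rw [hanti, h34]
  have h11 : lie (e 0) (e 0) = 0 := hzero _
  have h22 : lie (e 1) (e 1) = 0 := hzero _
  have h33 : lie (e 2) (e 2) = 0 := hzero _
  have h44 : lie (e 3) (e 3) = 0 := hzero _
  -- Koszul halved
  have h2 : ∀ X Y Z : G, g (nabla X Y) Z
      = (g (lie X Y) Z - g (lie Y Z) X + g (lie Z X) Y) / 2 := by
    intro X Y Z
    have := hK X Y Z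
    linarith
  -- coordinates via g
  have hco : ∀ (X : G) (k : Fin 4),
      e.repr X k = (if k = 2 then (-1 : ℝ) else 1) * g X (e k) := by
    intro X k
    conv_rhs => rw [← e.sum_repr X]
    rw [map_sum, LinearMap.sum_apply, Fin.sum_univ_four]
    fin_cases k <;>
      simp [map_smul, LinearMap.smul_apply, hg, smul_eq_mul]
  have hrep : ∀ X : G,
      X = g X (e 0) • e 0 + g X (e 1) • e 1 - g X (e 2) • e 2 + g X (e 3) • e 3 := by
    intro X
    conv_lhs => rw [← e.sum_repr X]
    rw [Fin.sum_univ_four, hco X 0, hco X 1, hco X 2, hco X 3]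
    simp
    module
  have n00 : nabla (e 0) (e 0) = (-A) • e 3 := by
    rw [hrep (nabla (e 0) (e 0))]
    simp [h2, h11, h12, h13, h14, h21, h22, h23, h24, h31, h32, h33, h34,
      h41, h42, h43, h44, hg]
    try module
  have n01 : nabla (e 0) (e 1) = 0 := by
    rw [hrep (nabla (e 0) (e 1))]
    simp [h2, h11, h12, h13, h14, h21, h22, h23, h24, h31, h32, h33, h34,
      h41, h42, h43, h44, hg]
    try module
  have n02 : nabla (e 0) (e 2) = 0 := by
    rw [hrep (nabla (e 0) (e 2))]
    simp [h2, h11, h12, h13, h14, h21, h22, h23, h24, h31, h32, h33, h34,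
      h41, h42, h43, h44, hg]
    try module
  have n03 : nabla (e 0) (e 3) = A • e 0 := by
    rw [hrep (nabla (e 0) (e 3))]
    simp [h2, h11, h12, h13, h14, h21, h22, h23, h24, h31, h32, h33, h34,
      h41, h42, h43, h44, hg]
    try module
  have n10 : nabla (e 1) (e 0) = 0 := by
    rw [hrep (nabla (e 1) (e 0))]
    simp [h2, h11, h12, h13, h14, h21, h22, h23, h24, h31, h32, h33, h34,
      h41, h42, h43, h44, hg]
    try module
  have n11 : nabla (e 1) (e 1) = (-A) • e 3 := by
    rw [hrep (nabla (e 1) (e 1))]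
    simp [h2, h11, h12, h13, h14, h21, h22, h23, h24, h31, h32, h33, h34,
      h41, h42, h43, h44, hg]
    try module
  have n12 : nabla (e 1) (e 2) = 0 := by
    rw [hrep (nabla (e 1) (e 2))]
    simp [h2, h11, h12, h13, h14, h21, h22, h23, h24, h31, h32, h33, h34,
      h41, h42, h43, h44, hg]
    try module
  have n13 : nabla (e 1) (e 3) = A • e 1 := by
    rw [hrep (nabla (e 1) (e 3))]
    simp [h2, h11, h12, h13, h14, h21, h22, h23, h24, h31, h32, h33, h34,
      h41, h42, h43, h44, hg]
    try module
  have n20 : nabla (e 2) (e 0) = 0 := by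
    rw [hrep (nabla (e 2) (e 0))]
    simp [h2, h11, h12, h13, h14, h21, h22, h23, h24, h31, h32, h33, h34,
      h41, h42, h43, h44, hg]
    try module
  have n21 : nabla (e 2) (e 1) = 0 := by
    rw [hrep (nabla (e 2) (e 1))]
    simp [h2, h11, h12, h13, h14, h21, h22, h23, h24, h31, h32, h33, h34,
      h41, h42, h43, h44, hg]
    try module
  have n22 : nabla (e 2) (e 2) = A • e 3 := by
    rw [hrep (nabla (e 2) (e 2))]
    simp [h2, h11, h12, h13, h14, h21, h22, h23, h24, h31, h32, h33, h34,
      h41, h42, h43, h44, hg]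
    try module
  have n23 : nabla (e 2) (e 3) = A • e 2 := by
    rw [hrep (nabla (e 2) (e 3))]
    simp [h2, h11, h12, h13, h14, h21, h22, h23, h24, h31, h32, h33, h34,
      h41, h42, h43, h44, hg]
    try module
  have n30 : nabla (e 3) (e 0) = 0 := by
    rw [hrep (nabla (e 3) (e 0))]
    simp [h2, h11, h12, h13, h14, h21, h22, h23, h24, h31, h32, h33, h34,
      h41, h42, h43, h44, hg]
    try module
  have n31 : nabla (e 3) (e 1) = (-B) • e 2 := by
    rw [hrep (nabla (e 3) (e 1))]
    simp [h2, h11, h12, h13, h14, h21, h22, h23, h24, h31, h32, h33, h34,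
      h41, h42, h43, h44, hg]
    try module
  have n32 : nabla (e 3) (e 2) = (-B) • e 1 := by
    rw [hrep (nabla (e 3) (e 2))]
    simp [h2, h11, h12, h13, h14, h21, h22, h23, h24, h31, h32, h33, h34,
      h41, h42, h43, h44, hg]
    try module
  have n33 : nabla (e 3) (e 3) = 0 := by
    rw [hrep (nabla (e 3) (e 3))]
    simp [h2, h11, h12, h13, h14, h21, h22, h23, h24, h31, h32, h33, h34,
      h41, h42, h43, h44, hg]
    try module
  have key : ∀ a b c d : ℝ,
      lap (a • e 0 + b • e 1 + c • e 2 + d • e 3)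
        = (-(A ^ 2 * a)) • e 0 + ((B ^ 2 - A ^ 2) * b - 3 * A * B * c) • e 1
          + ((B ^ 2 - A ^ 2) * c - 3 * A * B * b) • e 2 + (-(3 * A ^ 2 * d)) • e 3 := by
    intro a b c d
    show (∑ i : Fin 4, eps i • (nabla (e i) (nabla (e i)
        (a • e 0 + b • e 1 + c • e 2 + d • e 3))
        - nabla (nabla (e i) (e i)) (a • e 0 + b • e 1 + c • e 2 + d • e 3))) = _
    rw [Fin.sum_univ_four]
    simp only [eps, map_add, map_smul, LinearMap.add_apply, LinearMap.smul_apply,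
      n00, n01, n02, n03, n10, n11, n12, n13, n20, n21, n22, n23, n30, n31, n32, n33,
      map_zero, LinearMap.zero_apply, map_neg, LinearMap.neg_apply, smul_zero]
    simp only [Fin.reduceEq, reduceIte]
    module
  refine ⟨key, fun b => ?_⟩
  have h1 : b • (e 1 + e 2) = (0 : ℝ) • e 0 + b • e 1 + b • e 2 + (0 : ℝ) • e 3 := by
    module
  have h2' : lap (b • (e 1 + e 2)) = (B ^ 2 - A ^ 2 - 3 * A * B) • (b • (e 1 + e 2)) := by
    rw [h1, key]
    module
  exact ⟨h2', ⟨_, h2'⟩⟩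
end

section
/- Suppose ε = 1, and let V = a(e₁ + e₃) for some a ∈ ℝ. Then the rough Laplacian satisfies ∇*∇V = −(13/4)A²·V; in particular, V is a critical point for the energy functional restricted to left-invariant vector fields of the same length (i.e., ∇*∇V is collinear to V). -/
theorem stmt_10 {G : Type*} [AddCommGroup G] [Module ℝ G]
    (e : Module.Basis (Fin 4) ℝ G)
    (lie : G →ₗ[ℝ] G →ₗ[ℝ] G)
    (g : G →ₗ[ℝ] G →ₗ[ℝ] ℝ)
    (nabla : G →ₗ[ℝ] G →ₗ[ℝ] G)
    (A ε a : ℝ) (hε : ε = 1)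
    (hanti : ∀ X Y : G, lie X Y = - lie Y X)
    (h12 : lie (e 0) (e 1) = 0)
    (h13 : lie (e 0) (e 2) = 0)
    (h14 : lie (e 0) (e 3) = (5 * A / 2) • e 0 + (3 * ε * A) • e 2)
    (h23 : lie (e 1) (e 2) = 0)
    (h24 : lie (e 1) (e 3) = A • e 1)
    (h34 : lie (e 2) (e 3) = (-(A / 2)) • e 2)
    (hg : ∀ i j : Fin 4, g (e i) (e j) = if i = j then (if i = 2 then (-1 : ℝ) else 1) else 0)
    (hgsymm : ∀ X Y : G, g X Y = g Y X)
    (hK : ∀ X Y Z : G, 2 * g (nabla X Y) Z = g (lie X Y) Z - g (lie Y Z) X + g (lie Z X) Y) :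
    (let eps : Fin 4 → ℝ := fun i => if i = (2 : Fin 4) then (-1 : ℝ) else 1
     let lap : G → G := fun V : G => ∑ i : Fin 4, eps i • (nabla (e i) (nabla (e i) V) - nabla (nabla (e i) (e i)) V)
     let V : G := a • (e 0 + e 2)
     lap V = (-(13 / 4) * A ^ 2) • V ∧ ∃ lam : ℝ, lap V = lam • V) := by
  subst hε
  intro eps lap V
  have h0 : ∀ X : G, lie X X = 0 := by
    intro X
    have h := hanti X X
    have h2 : (2 : ℝ) • lie X X = 0 := by
      rw [two_smul]; nth_rewrite 1 [h]; exact neg_add_cancel _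
    simpa using h2
  have h21 : lie (e 1) (e 0) = 0 := by rw [hanti, h12, neg_zero]
  have h31 : lie (e 2) (e 0) = 0 := by rw [hanti, h13, neg_zero]
  have h41 : lie (e 3) (e 0) = -((5 * A / 2) • e 0 + (3 * 1 * A) • e 2) := by rw [hanti, h14]
  have h32 : lie (e 2) (e 1) = 0 := by rw [hanti, h23, neg_zero]
  have h42 : lie (e 3) (e 1) = -(A • e 1) := by rw [hanti, h24]
  have h43 : lie (e 3) (e 2) = -((-(A / 2)) • e 2) := by rw [hanti, h34]
  have hW : ∀ W : G, W = e.repr W 0 • e 0 + e.repr W 1 • e 1 + e.repr W 2 • e 2 + e.repr W 3 • e 3 := by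
    intro W
    have h := e.sum_repr W
    rw [Fin.sum_univ_four] at h
    exact h.symm
  have hc : ∀ (W : G) (k : Fin 4), g W (e k) = (if k = 2 then (-1 : ℝ) else 1) * e.repr W k := by
    intro W k
    conv_lhs => rw [hW W]
    fin_cases k <;>
      simp [map_add, map_smul, LinearMap.add_apply, LinearMap.smul_apply, hg, smul_eq_mul]
  have hrep : ∀ W : G, W = (g W (e 0)) • e 0 + (g W (e 1)) • e 1 - (g W (e 2)) • e 2 + (g W (e 3)) • e 3 := by
    intro W
    have c0 := hc W 0; have c1 := hc W 1; have c2 := hc W 2; have c3 := hc W 3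
    simp only [Fin.reduceEq, reduceIte, one_mul, neg_one_mul] at c0 c1 c2 c3
    rw [c0, c1, c2, c3]
    conv_lhs => rw [hW W]
    module
  have gN : ∀ i j k : Fin 4, g (nabla (e i) (e j)) (e k)
      = (g (lie (e i) (e j)) (e k) - g (lie (e j) (e k)) (e i) + g (lie (e k) (e i)) (e j)) / 2 := by
    intro i j k
    have h := hK (e i) (e j) (e k)
    linarith
  have n00 : nabla (e 0) (e 0) = (-5 / 2 * A) • e 3 := by
    rw [hrep (nabla (e 0) (e 0)), gN 0 0 0, gN 0 0 1, gN 0 0 2, gN 0 0 3]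
    simp only [h0, h12, h13, h14, h23, h24, h34, h21, h31, h41, h32, h42, h43, map_add, map_smul, map_neg, map_zero, LinearMap.add_apply,
      LinearMap.smul_apply, LinearMap.neg_apply, LinearMap.zero_apply, hg, smul_eq_mul,
      Fin.reduceEq, reduceIte]
    module
  have n02 : nabla (e 0) (e 2) = (3 / 2 * A) • e 3 := by
    rw [hrep (nabla (e 0) (e 2)), gN 0 2 0, gN 0 2 1, gN 0 2 2, gN 0 2 3]
    simp only [h0, h12, h13, h14, h23, h24, h34, h21, h31, h41, h32, h42, h43, map_add, map_smul, map_neg, map_zero, LinearMap.add_apply,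
      LinearMap.smul_apply, LinearMap.neg_apply, LinearMap.zero_apply, hg, smul_eq_mul,
      Fin.reduceEq, reduceIte]
    module
  have n03 : nabla (e 0) (e 3) = (5 / 2 * A) • e 0 + (3 / 2 * A) • e 2 := by
    rw [hrep (nabla (e 0) (e 3)), gN 0 3 0, gN 0 3 1, gN 0 3 2, gN 0 3 3]
    simp only [h0, h12, h13, h14, h23, h24, h34, h21, h31, h41, h32, h42, h43, map_add, map_smul, map_neg, map_zero, LinearMap.add_apply,
      LinearMap.smul_apply, LinearMap.neg_apply, LinearMap.zero_apply, hg, smul_eq_mul,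
      Fin.reduceEq, reduceIte]
    module
  have n10 : nabla (e 1) (e 0) = (0 : G) := by
    rw [hrep (nabla (e 1) (e 0)), gN 1 0 0, gN 1 0 1, gN 1 0 2, gN 1 0 3]
    simp only [h0, h12, h13, h14, h23, h24, h34, h21, h31, h41, h32, h42, h43, map_add, map_smul, map_neg, map_zero, LinearMap.add_apply,
      LinearMap.smul_apply, LinearMap.neg_apply, LinearMap.zero_apply, hg, smul_eq_mul,
      Fin.reduceEq, reduceIte]
    module
  have n12 : nabla (e 1) (e 2) = (0 : G) := by
    rw [hrep (nabla (e 1) (e 2)), gN 1 2 0, gN 1 2 1, gN 1 2 2, gN 1 2 3]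
    simp only [h0, h12, h13, h14, h23, h24, h34, h21, h31, h41, h32, h42, h43, map_add, map_smul, map_neg, map_zero, LinearMap.add_apply,
      LinearMap.smul_apply, LinearMap.neg_apply, LinearMap.zero_apply, hg, smul_eq_mul,
      Fin.reduceEq, reduceIte]
    module
  have n13 : nabla (e 1) (e 3) = (1 * A) • e 1 := by
    rw [hrep (nabla (e 1) (e 3)), gN 1 3 0, gN 1 3 1, gN 1 3 2, gN 1 3 3]
    simp only [h0, h12, h13, h14, h23, h24, h34, h21, h31, h41, h32, h42, h43, map_add, map_smul, map_neg, map_zero, LinearMap.add_apply,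
      LinearMap.smul_apply, LinearMap.neg_apply, LinearMap.zero_apply, hg, smul_eq_mul,
      Fin.reduceEq, reduceIte]
    module
  have n11 : nabla (e 1) (e 1) = (-1 * A) • e 3 := by
    rw [hrep (nabla (e 1) (e 1)), gN 1 1 0, gN 1 1 1, gN 1 1 2, gN 1 1 3]
    simp only [h0, h12, h13, h14, h23, h24, h34, h21, h31, h41, h32, h42, h43, map_add, map_smul, map_neg, map_zero, LinearMap.add_apply,
      LinearMap.smul_apply, LinearMap.neg_apply, LinearMap.zero_apply, hg, smul_eq_mul,
      Fin.reduceEq, reduceIte]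
    module
  have n20 : nabla (e 2) (e 0) = (3 / 2 * A) • e 3 := by
    rw [hrep (nabla (e 2) (e 0)), gN 2 0 0, gN 2 0 1, gN 2 0 2, gN 2 0 3]
    simp only [h0, h12, h13, h14, h23, h24, h34, h21, h31, h41, h32, h42, h43, map_add, map_smul, map_neg, map_zero, LinearMap.add_apply,
      LinearMap.smul_apply, LinearMap.neg_apply, LinearMap.zero_apply, hg, smul_eq_mul,
      Fin.reduceEq, reduceIte]
    module
  have n22 : nabla (e 2) (e 2) = (-1 / 2 * A) • e 3 := by
    rw [hrep (nabla (e 2) (e 2)), gN 2 2 0, gN 2 2 1, gN 2 2 2, gN 2 2 3]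
    simp only [h0, h12, h13, h14, h23, h24, h34, h21, h31, h41, h32, h42, h43, map_add, map_smul, map_neg, map_zero, LinearMap.add_apply,
      LinearMap.smul_apply, LinearMap.neg_apply, LinearMap.zero_apply, hg, smul_eq_mul,
      Fin.reduceEq, reduceIte]
    module
  have n23 : nabla (e 2) (e 3) = (-3 / 2 * A) • e 0 + (-1 / 2 * A) • e 2 := by
    rw [hrep (nabla (e 2) (e 3)), gN 2 3 0, gN 2 3 1, gN 2 3 2, gN 2 3 3]
    simp only [h0, h12, h13, h14, h23, h24, h34, h21, h31, h41, h32, h42, h43, map_add, map_smul, map_neg, map_zero, LinearMap.add_apply,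
      LinearMap.smul_apply, LinearMap.neg_apply, LinearMap.zero_apply, hg, smul_eq_mul,
      Fin.reduceEq, reduceIte]
    module
  have n30 : nabla (e 3) (e 0) = (-3 / 2 * A) • e 2 := by
    rw [hrep (nabla (e 3) (e 0)), gN 3 0 0, gN 3 0 1, gN 3 0 2, gN 3 0 3]
    simp only [h0, h12, h13, h14, h23, h24, h34, h21, h31, h41, h32, h42, h43, map_add, map_smul, map_neg, map_zero, LinearMap.add_apply,
      LinearMap.smul_apply, LinearMap.neg_apply, LinearMap.zero_apply, hg, smul_eq_mul,
      Fin.reduceEq, reduceIte]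
    module
  have n32 : nabla (e 3) (e 2) = (-3 / 2 * A) • e 0 := by
    rw [hrep (nabla (e 3) (e 2)), gN 3 2 0, gN 3 2 1, gN 3 2 2, gN 3 2 3]
    simp only [h0, h12, h13, h14, h23, h24, h34, h21, h31, h41, h32, h42, h43, map_add, map_smul, map_neg, map_zero, LinearMap.add_apply,
      LinearMap.smul_apply, LinearMap.neg_apply, LinearMap.zero_apply, hg, smul_eq_mul,
      Fin.reduceEq, reduceIte]
    module
  have n33 : nabla (e 3) (e 3) = (0 : G) := by
    rw [hrep (nabla (e 3) (e 3)), gN 3 3 0, gN 3 3 1, gN 3 3 2, gN 3 3 3]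
    simp only [h0, h12, h13, h14, h23, h24, h34, h21, h31, h41, h32, h42, h43, map_add, map_smul, map_neg, map_zero, LinearMap.add_apply,
      LinearMap.smul_apply, LinearMap.neg_apply, LinearMap.zero_apply, hg, smul_eq_mul,
      Fin.reduceEq, reduceIte]
    module

  have key : lap V = (-(13 / 4) * A ^ 2) • V := by
    unfold lap eps V
    simp only [Fin.sum_univ_four, Fin.reduceEq, reduceIte]
    simp only [map_add, map_smul, map_sub, map_zero, LinearMap.add_apply, LinearMap.smul_apply,
      LinearMap.sub_apply, LinearMap.zero_apply, n00, n02, n03, n10, n12, n13, n11, n20, n22,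
      n23, n30, n32, n33, smul_zero, zero_smul, smul_add, smul_sub, sub_zero, zero_sub, add_zero, zero_add]
    module
  exact ⟨key, ⟨_, key⟩⟩
end
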